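/- In a strictly p-convex geodesic space (p > 1) satisfying the stable symmetric orthogonality property (SO*), for all unit-speed geodesics γ, η issuing from the same point, the one-sided derivatives satisfy: lim_{t→0⁺} (d²(η_t, γ_1) − d²(η_0, γ_1))/t = lim_{s→0⁺} (d²(η_1, γ_s) − d²(η_1, γ_0))/s. -/

import Mathlib

open Set Metric Filter

variable {M : Type*}

def IsGeodesic [MetricSpace M] (γ : ℝ → M) : Prop :=
  ∀ s ∈ Set.Icc (0:ℝ) 1, ∀ t ∈ Set.Icc (0:ℝ) 1,
    dist (γ s) (γ t) = |s - t| * dist (γ 0) (γ 1)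

def GeodesicSpace (M : Type*) [MetricSpace M] : Prop :=
  ∀ x y : M, ∃ γ : ℝ → M, IsGeodesic γ ∧ γ 0 = x ∧ γ 1 = y

def Perp [MetricSpace M] (γ η : ℝ → M) : Prop :=
  ∀ t ∈ Set.Icc (0:ℝ) 1, ∀ s ∈ Set.Icc (0:ℝ) 1,
    dist (γ 0) (γ t) ≤ dist (η s) (γ t)

def SO (M : Type*) [MetricSpace M] : Prop :=
  ∀ γ η : ℝ → M, IsGeodesic γ → IsGeodesic η → γ 0 = η 0 → Perp γ η → Perp η γ

def WeaklyConvex [MetricSpace M] (C : Set M) : Prop :=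
  ∀ x ∈ C, ∀ y ∈ C, ∃ γ : ℝ → M, IsGeodesic γ ∧ γ 0 = x ∧ γ 1 = y ∧
    ∀ t ∈ Set.Icc (0:ℝ) 1, γ t ∈ C

def GeoConvex [MetricSpace M] (C : Set M) : Prop :=
  ∀ γ : ℝ → M, IsGeodesic γ → γ 0 ∈ C → γ 1 ∈ C → ∀ t ∈ Set.Icc (0:ℝ) 1, γ t ∈ C

def NearestPt [MetricSpace M] (C : Set M) (x y : M) : Prop :=
  y ∈ C ∧ dist x y = Metric.infDist x C

def NE (M : Type*) [MetricSpace M] : Prop :=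
  ∀ C : Set M, IsClosed C → WeaklyConvex C → ∀ x y xC yC : M,
    NearestPt C x xC → NearestPt C y yC → dist xC yC ≤ dist x y

def BusemannConvex (M : Type*) [MetricSpace M] : Prop :=
  ∀ γ η : ℝ → M, IsGeodesic γ → IsGeodesic η →
    ConvexOn ℝ (Set.Icc (0:ℝ) 1) (fun t => dist (γ t) (η t))

/-! ### Auxiliary lemmas -/

section Aux

lemma IsGeodesic.dist_from_zero [MetricSpace M] {γ : ℝ → M} (hγ : IsGeodesic γ) {t : ℝ}
    (ht : t ∈ Set.Icc (0:ℝ) 1) : dist (γ 0) (γ t) = t * dist (γ 0) (γ 1) := by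
  have h := hγ 0 ⟨le_refl 0, zero_le_one⟩ t ht
  rwa [zero_sub, abs_neg, abs_of_nonneg ht.1] at h

lemma IsGeodesic.dist_to_one [MetricSpace M] {γ : ℝ → M} (hγ : IsGeodesic γ) {t : ℝ}
    (ht : t ∈ Set.Icc (0:ℝ) 1) : dist (γ t) (γ 1) = (1 - t) * dist (γ 0) (γ 1) := by
  have h := hγ t ht 1 ⟨zero_le_one, le_refl 1⟩
  rwa [abs_of_nonpos (by linarith [ht.2] : t - 1 ≤ 0), neg_sub] at h

/-- the point `(x, u)` of `M ×₂ ℝ`. -/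
noncomputable def pr [MetricSpace M] (x : M) (u : ℝ) : WithLp 2 (M × ℝ) :=
  (WithLp.equiv 2 (M × ℝ)).symm (x, u)

lemma dist_pr [MetricSpace M] (x y : M) (u v : ℝ) :
    dist (pr x u) (pr y v) = Real.sqrt (dist x y ^ 2 + (u - v) ^ 2) := by
  have hp2 : 0 < (2:ENNReal).toReal := by norm_num
  rw [WithLp.prod_dist_eq_add hp2]
  have h1 : dist (pr x u).fst (pr y v).fst = dist x y := rfl
  have h2 : dist (pr x u).snd (pr y v).snd = |u - v| := rfl
  have ht : ((2:ENNReal)).toReal = (2:ℝ) := by norm_num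
  have e1 : ∀ z : ℝ, z ^ (2:ℝ) = z ^ (2:ℕ) := fun z => by
    rw [show (2:ℝ) = ((2:ℕ):ℝ) by norm_num, Real.rpow_natCast]
  rw [h1, h2, ht, e1, e1, sq_abs, Real.sqrt_eq_rpow]

lemma dist_pr_sq [MetricSpace M] (x y : M) (u v : ℝ) :
    dist (pr x u) (pr y v) ^ 2 = dist x y ^ 2 + (u - v) ^ 2 := by
  rw [dist_pr, Real.sq_sqrt (by positivity)]

lemma IsGeodesic.pr [MetricSpace M] {γ : ℝ → M} (hγ : IsGeodesic γ) (β : ℝ) :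
    IsGeodesic (fun s => pr (γ s) (β * s)) := by
  intro s hs t ht
  apply (sq_eq_sq₀ dist_nonneg (by positivity)).mp
  rw [dist_pr_sq, mul_pow, dist_pr_sq, hγ s hs t ht, mul_pow, sq_abs]
  ring

lemma perp_of_endpoint {N : Type*} [MetricSpace N] {σ ζ : ℝ → N} (hσ : IsGeodesic σ)
    (h : ∀ s ∈ Set.Icc (0:ℝ) 1, dist (σ 0) (σ 1) ≤ dist (ζ s) (σ 1)) : Perp σ ζ := by
  intro t ht s hs
  have h1 : dist (σ 0) (σ t) = t * dist (σ 0) (σ 1) := hσ.dist_from_zero ht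
  have h2 : dist (σ t) (σ 1) = (1 - t) * dist (σ 0) (σ 1) := hσ.dist_to_one ht
  have h3 := h s hs
  have h4 : dist (ζ s) (σ 1) ≤ dist (ζ s) (σ t) + dist (σ t) (σ 1) := dist_triangle _ _ _
  rw [h1]
  nlinarith [h3, h4, h2, dist_nonneg (x := σ 0) (y := σ 1)]

lemma rpow_sub_le {p R x y : ℝ} (hp : 1 ≤ p) (hy : 0 ≤ y) (hyx : y ≤ x) (hxR : x ≤ R) :
    x ^ p - y ^ p ≤ (R + 1) ^ p * (x - y) := by
  rcases eq_or_lt_of_le hyx with rfl | hlt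
  · simp
  have hx : 0 ≤ x := hy.trans hyx
  have hR : 0 ≤ R := hx.trans hxR
  have hs := (convexOn_rpow hp).secant_mono (a := y) (x := x) (y := R + 1)
    (Set.mem_Ici.mpr hy) (Set.mem_Ici.mpr hx) (Set.mem_Ici.mpr (by positivity))
    hlt.ne' (by intro hh; linarith) (by linarith)
  have hnum : 0 ≤ (R + 1) ^ p - y ^ p := by
    have := Real.rpow_le_rpow hy (by linarith : y ≤ R + 1) (by linarith : (0:ℝ) ≤ p)
    linarith
  have h2 : ((R + 1) ^ p - y ^ p) / (R + 1 - y) ≤ (R + 1) ^ p := by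
    have hden : (1:ℝ) ≤ R + 1 - y := by linarith
    calc ((R + 1) ^ p - y ^ p) / (R + 1 - y) ≤ ((R + 1) ^ p - y ^ p) / 1 :=
          div_le_div_of_nonneg_left hnum zero_lt_one hden
      _ = (R + 1) ^ p - y ^ p := div_one _
      _ ≤ (R + 1) ^ p := by linarith [Real.rpow_nonneg hy p]
  have h3 := hs.trans h2
  rw [div_le_iff₀ (by linarith : (0:ℝ) < x - y)] at h3
  linarith

lemma abs_rpow_sub_le {p R x y : ℝ} (hp : 1 ≤ p) (hx : 0 ≤ x) (hy : 0 ≤ y) (hxR : x ≤ R)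
    (hyR : y ≤ R) : |x ^ p - y ^ p| ≤ (R + 1) ^ p * |x - y| := by
  rcases le_total y x with h | h
  · rw [abs_of_nonneg (by linarith [Real.rpow_le_rpow hy h (by linarith : (0:ℝ) ≤ p)]),
      abs_of_nonneg (by linarith)]
    exact rpow_sub_le hp hy h hxR
  · rw [abs_sub_comm, abs_sub_comm x y,
      abs_of_nonneg (by linarith [Real.rpow_le_rpow hx h (by linarith : (0:ℝ) ≤ p)]),
      abs_of_nonneg (by linarith)]
    exact rpow_sub_le hp hx h hyR

set_option maxHeartbeats 1000000 in
/-- Existence of the one-sided derivative of the squared distance along a geodesic. -/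
lemma exists_rderiv [MetricSpace M] {p : ℝ} (hp : 1 < p)
    (hpc : ∀ x : M, ∀ γ : ℝ → M, IsGeodesic γ → γ 0 ≠ γ 1 →
      StrictConvexOn ℝ (Set.Icc (0:ℝ) 1) (fun t => dist x (γ t) ^ p))
    {ζ : ℝ → M} (hζ : IsGeodesic ζ) (q : M) :
    ∃ L : ℝ, Filter.Tendsto (fun t => (dist (ζ t) q ^ 2 - dist (ζ 0) q ^ 2) / t)
      (nhdsWithin 0 (Set.Ioi 0)) (nhds L) := by
  by_cases hc : ζ 0 = ζ 1
  · refine ⟨0, (tendsto_const_nhds : Tendsto (fun _ : ℝ => (0:ℝ)) _ _).congr' ?_⟩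
    filter_upwards [Ioc_mem_nhdsGT (zero_lt_one : (0:ℝ) < 1)] with t ht
    have h1 : dist (ζ 0) (ζ t) = t * dist (ζ 0) (ζ 1) := hζ.dist_from_zero ⟨ht.1.le, ht.2⟩
    rw [hc, dist_self, mul_zero] at h1
    have h2 : ζ t = ζ 1 := (dist_eq_zero.mp h1).symm
    rw [h2, ← hc]
    simp
  by_cases hq0 : dist (ζ 0) q = 0
  · have hqe : ζ 0 = q := dist_eq_zero.mp hq0
    have h2 : Tendsto (fun t : ℝ => t * dist (ζ 0) (ζ 1) ^ 2) (nhdsWithin 0 (Set.Ioi 0))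
        (nhds 0) := by
      have h3 : Tendsto (fun t : ℝ => t * dist (ζ 0) (ζ 1) ^ 2) (nhds 0)
          (nhds (0 * dist (ζ 0) (ζ 1) ^ 2)) := (continuous_id.mul continuous_const).tendsto 0
      simpa using h3.mono_left nhdsWithin_le_nhds
    refine ⟨0, h2.congr' ?_⟩
    filter_upwards [Ioc_mem_nhdsGT (zero_lt_one : (0:ℝ) < 1)] with t ht
    have h1 : dist (ζ t) q = t * dist (ζ 0) (ζ 1) := by
      rw [← hqe, dist_comm]
      exact hζ.dist_from_zero ⟨ht.1.le, ht.2⟩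
    have htne : t ≠ 0 := ne_of_gt ht.1
    rw [eq_comm, h1, hq0]
    field_simp
    ring
  -- main case
  have hd0 : 0 < dist q (ζ 0) := by
    rw [dist_comm]
    exact dist_nonneg.lt_of_ne (Ne.symm hq0)
  have hcvx : ConvexOn ℝ (Set.Icc (0:ℝ) 1) (fun t => dist q (ζ t) ^ p) :=
    (hpc q ζ hζ hc).convexOn
  set φ : ℝ → ℝ := fun t => dist q (ζ t) ^ p with hφdef
  set S : ℝ → ℝ := fun t => slope φ 0 (min t 1) with hSdef
  have hmono : MonotoneOn S (Ioi (0:ℝ)) := by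
    intro x hx y hy hxy
    have hx1 : min x 1 ∈ Set.Icc (0:ℝ) 1 := ⟨(lt_min hx zero_lt_one).le, min_le_right _ _⟩
    have hy1 : min y 1 ∈ Set.Icc (0:ℝ) 1 := ⟨(lt_min hy zero_lt_one).le, min_le_right _ _⟩
    simp only [hSdef, slope_def_field]
    exact hcvx.secant_mono ⟨le_refl 0, zero_le_one⟩ hx1 hy1
      (lt_min hx zero_lt_one).ne' (lt_min hy zero_lt_one).ne'
      (min_le_min hxy (le_refl 1))
  set c := dist (ζ 0) (ζ 1) with hcdef
  set R := dist q (ζ 0) + c with hRdef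
  have hc0 : 0 ≤ c := dist_nonneg
  have hbd : ∀ x ∈ Ioi (0:ℝ), -((R + 1) ^ p * c) ≤ S x := by
    intro x hx
    set t := min x 1 with htdef
    have ht0 : 0 < t := lt_min hx zero_lt_one
    have ht1 : t ≤ 1 := min_le_right _ _
    have h1 : dist (ζ 0) (ζ t) = t * c := hζ.dist_from_zero ⟨ht0.le, ht1⟩
    have hdt : dist q (ζ t) ≤ R := by
      have htri := dist_triangle q (ζ 0) (ζ t)
      rw [hRdef]
      linarith [htri, h1, mul_le_of_le_one_left hc0 ht1]
    have hdiff : |dist q (ζ t) - dist q (ζ 0)| ≤ t * c := by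
      have h3 := abs_dist_sub_le (ζ t) (ζ 0) q
      rw [dist_comm (ζ t) (ζ 0), h1] at h3
      calc |dist q (ζ t) - dist q (ζ 0)| = |dist (ζ t) q - dist (ζ 0) q| := by
            rw [dist_comm q (ζ t), dist_comm q (ζ 0)]
        _ ≤ t * c := h3
    have hqR : dist q (ζ 0) ≤ R := by rw [hRdef]; linarith
    have habs : |φ t - φ 0| ≤ (R + 1) ^ p * (t * c) := by
      calc |φ t - φ 0| ≤ (R + 1) ^ p * |dist q (ζ t) - dist q (ζ 0)| :=
            abs_rpow_sub_le hp.le dist_nonneg dist_nonneg hdt hqR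
        _ ≤ (R + 1) ^ p * (t * c) := by
            apply mul_le_mul_of_nonneg_left hdiff
            positivity
    have hS : S x = (φ t - φ 0) / t := by
      simp only [hSdef, slope_def_field, sub_zero, htdef]
    rw [hS, le_div_iff₀ ht0]
    have hna := neg_abs_le (φ t - φ 0)
    nlinarith [hna, habs]
  have hbdd : BddBelow (S '' Ioi (0:ℝ)) := by
    refine ⟨-((R + 1) ^ p * c), ?_⟩
    rintro _ ⟨x, hx, rfl⟩
    exact hbd x hx
  have htend0 : Tendsto S (nhdsWithin 0 (Set.Ioi 0)) (nhds (sInf (S '' Ioi (0:ℝ)))) :=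
    hmono.tendsto_nhdsGT hbdd
  have htend : Tendsto (slope φ 0) (nhdsWithin 0 (Set.Ioi 0)) (nhds (sInf (S '' Ioi (0:ℝ)))) := by
    apply htend0.congr'
    filter_upwards [Ioc_mem_nhdsGT (zero_lt_one : (0:ℝ) < 1)] with t ht
    simp only [hSdef, min_eq_left ht.2]
  have hinner : HasDerivWithinAt φ (sInf (S '' Ioi (0:ℝ))) (Ioi 0) 0 :=
    (hasDerivWithinAt_iff_tendsto_slope' (by simp)).mpr htend
  have hφ0 : 0 < φ 0 := Real.rpow_pos_of_pos hd0 p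
  have houter : HasDerivAt (fun y : ℝ => y ^ ((2:ℝ)/p)) (((2:ℝ)/p) * φ 0 ^ ((2:ℝ)/p - 1)) (φ 0) :=
    Real.hasDerivAt_rpow_const (Or.inl hφ0.ne')
  have hcomp := houter.comp_hasDerivWithinAt (x := 0) hinner
  have H := (hasDerivWithinAt_iff_tendsto_slope' (by simp : (0:ℝ) ∉ Ioi (0:ℝ))).mp hcomp
  have hpne : p ≠ 0 := by linarith
  have hfun : ∀ t : ℝ, φ t ^ ((2:ℝ)/p) = dist (ζ t) q ^ 2 := by
    intro t
    have hmul : p * ((2:ℝ)/p) = 2 := by field_simp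
    simp only [hφdef]
    calc (dist q (ζ t) ^ p) ^ ((2:ℝ)/p) = dist q (ζ t) ^ (p * ((2:ℝ)/p)) :=
          (Real.rpow_mul dist_nonneg _ _).symm
      _ = dist q (ζ t) ^ (2:ℝ) := by rw [hmul]
      _ = dist (ζ t) q ^ (2:ℕ) := by
          rw [dist_comm q (ζ t), show (2:ℝ) = ((2:ℕ):ℝ) by norm_num,
            Real.rpow_natCast (dist (ζ t) q) 2]
  refine ⟨_, Filter.Tendsto.congr (fun t => ?_) H⟩
  rw [slope_def_field, Function.comp_apply, Function.comp_apply, hfun, hfun, sub_zero]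

set_option maxHeartbeats 1000000 in
/-- Key no-crossing lemma. -/
lemma key_not_lt [MetricSpace M] (hSO : SO (WithLp 2 (M × ℝ))) (γ η : ℝ → M)
    (hγ : IsGeodesic γ) (hη : IsGeodesic η) (h0 : γ 0 = η 0) {L₁ L₂ : ℝ}
    (h₁ : Filter.Tendsto (fun t => (dist (η t) (γ 1) ^ 2 - dist (η 0) (γ 1) ^ 2) / t)
      (nhdsWithin 0 (Set.Ioi 0)) (nhds L₁))
    (h₂ : Filter.Tendsto (fun s => (dist (γ s) (η 1) ^ 2 - dist (γ 0) (η 1) ^ 2) / s)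
      (nhdsWithin 0 (Set.Ioi 0)) (nhds L₂)) :
    ¬ L₂ < L₁ := by
  intro hlt
  set m := (L₁ + L₂) / 2 with hmdef
  have hm1 : m < L₁ := by rw [hmdef]; linarith
  have hm2 : L₂ < m := by rw [hmdef]; linarith
  have hev : ∀ᶠ t in nhdsWithin 0 (Set.Ioi 0),
      m < (dist (η t) (γ 1) ^ 2 - dist (η 0) (γ 1) ^ 2) / t :=
    h₁.eventually (eventually_gt_nhds hm1)
  obtain ⟨u, hu0, husub⟩ := mem_nhdsGT_iff_exists_Ioc_subset.mp hev
  set t₁ := min u 1 with ht₁def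
  have ht₁0 : 0 < t₁ := lt_min hu0 zero_lt_one
  have ht₁1 : t₁ ≤ 1 := min_le_right _ _
  have hlow : ∀ t, t ∈ Set.Ioc 0 t₁ →
      m * t ≤ dist (η t) (γ 1) ^ 2 - dist (η 0) (γ 1) ^ 2 := by
    intro t ht
    have h7 : m < (dist (η t) (γ 1) ^ 2 - dist (η 0) (γ 1) ^ 2) / t :=
      husub ⟨ht.1, ht.2.trans (min_le_left _ _)⟩
    have h8 := (lt_div_iff₀ ht.1).mp h7
    linarith
  set K := dist (η 0) (γ 1) ^ 2 + |m| + 1 with hKdef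
  have hK0 : 0 < K := by rw [hKdef]; positivity
  set lam := Real.sqrt K / t₁ + 1 with hlamdef
  have hlam : 0 < lam := by
    rw [hlamdef]
    positivity
  set β := m / (2 * lam) with hβdef
  have hprod : 2 * lam * β = m := by
    rw [hβdef]
    field_simp
  have hKlam : K ≤ lam ^ 2 * t₁ ^ 2 := by
    have h1 : lam * t₁ = Real.sqrt K + t₁ := by
      rw [hlamdef]
      field_simp
    have h2 : lam ^ 2 * t₁ ^ 2 = (Real.sqrt K + t₁) ^ 2 := by rw [← h1]; ring
    have h3 : 0 ≤ Real.sqrt K * t₁ := mul_nonneg (Real.sqrt_nonneg K) ht₁0.le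
    nlinarith [Real.sq_sqrt hK0.le, h2, h3, sq_nonneg t₁]
  set σ : ℝ → WithLp 2 (M × ℝ) := fun s => pr (γ s) (β * s) with hσdef
  set τ : ℝ → WithLp 2 (M × ℝ) := fun t => pr (η t) (lam * t) with hτdef
  have hσg : IsGeodesic σ := hγ.pr β
  have hτg : IsGeodesic τ := hη.pr lam
  have hstart : σ 0 = τ 0 := by
    simp only [hσdef, hτdef, mul_zero, h0]
  have hperp1 : Perp σ τ := by
    apply perp_of_endpoint hσg
    intro s hs
    have hsq : dist (σ 0) (σ 1) ^ 2 ≤ dist (τ s) (σ 1) ^ 2 := by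
      have e1 : dist (σ 0) (σ 1) ^ 2 = dist (γ 0) (γ 1) ^ 2 + (β * 0 - β * 1) ^ 2 := by
        simp only [hσdef]
        exact dist_pr_sq _ _ _ _
      have e2 : dist (τ s) (σ 1) ^ 2 = dist (η s) (γ 1) ^ 2 + (lam * s - β * 1) ^ 2 := by
        simp only [hσdef, hτdef]
        exact dist_pr_sq _ _ _ _
      rw [e1, e2, h0]
      have hfs : m * s - lam ^ 2 * s ^ 2 ≤ dist (η s) (γ 1) ^ 2 - dist (η 0) (γ 1) ^ 2 := by
        rcases eq_or_lt_of_le hs.1 with hs0 | hs0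
        · rw [← hs0]
          norm_num
        rcases le_or_gt s t₁ with hst | hst
        · have h9 := hlow s ⟨hs0, hst⟩
          nlinarith [sq_nonneg (lam * s)]
        · have hfs0 : (0:ℝ) ≤ dist (η s) (γ 1) ^ 2 := by positivity
          have hms : m * s ≤ |m| := by
            have hh1 := mul_le_mul_of_nonneg_right (le_abs_self m) hs0.le
            have hh2 := mul_le_of_le_one_right (abs_nonneg m) hs.2
            linarith
          have h2 : lam ^ 2 * t₁ ^ 2 ≤ lam ^ 2 * s ^ 2 :=
            mul_le_mul_of_nonneg_left (pow_le_pow_left₀ ht₁0.le hst.le 2) (sq_nonneg lam)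
          have hKexp : dist (η 0) (γ 1) ^ 2 + |m| + 1 ≤ lam ^ 2 * t₁ ^ 2 := by
            rw [← hKdef]; exact hKlam
          linarith [hfs0, hms, h2, hKexp]
      have ee1 : (β * 0 - β * 1) ^ 2 = β ^ 2 := by ring
      have ee2 : (lam * s - β * 1) ^ 2 = lam ^ 2 * s ^ 2 - 2 * lam * β * s + β ^ 2 := by ring
      rw [ee1, ee2]
      have e3 : 2 * lam * β * s = m * s := by rw [hprod]
      linarith [hfs, e3]
    have h8 := Real.sqrt_le_sqrt hsq
    rwa [Real.sqrt_sq dist_nonneg, Real.sqrt_sq dist_nonneg] at h8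
  have hperp2 : Perp τ σ := hSO σ τ hσg hτg hstart hperp1
  have hineq : ∀ s, s ∈ Set.Icc (0:ℝ) 1 →
      dist (η 0) (η 1) ^ 2 + lam ^ 2 ≤ dist (γ s) (η 1) ^ 2 + (β * s - lam) ^ 2 := by
    intro s hs
    have hd := hperp2 1 ⟨zero_le_one, le_refl 1⟩ s hs
    have hsq := pow_le_pow_left₀ dist_nonneg hd 2
    simp only [hσdef, hτdef] at hsq
    rw [dist_pr_sq, dist_pr_sq] at hsq
    have e1 : (lam * 0 - lam * 1) ^ 2 = lam ^ 2 := by ring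
    have e2 : (β * s - lam * 1) ^ 2 = (β * s - lam) ^ 2 := by ring
    rw [e1, e2] at hsq
    exact hsq
  have hev2 : ∀ᶠ s in nhdsWithin 0 (Set.Ioi 0),
      m - β ^ 2 * s ≤ (dist (γ s) (η 1) ^ 2 - dist (γ 0) (η 1) ^ 2) / s := by
    filter_upwards [Ioc_mem_nhdsGT (zero_lt_one : (0:ℝ) < 1)] with s hs
    have h5 := hineq s ⟨hs.1.le, hs.2⟩
    have ee : (β * s - lam) ^ 2 = β ^ 2 * s ^ 2 - 2 * lam * β * s + lam ^ 2 := by ring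
    rw [ee] at h5
    rw [le_div_iff₀ hs.1]
    have e3 : 2 * lam * β * s = m * s := by rw [hprod]
    have e4 : dist (γ 0) (η 1) ^ 2 = dist (η 0) (η 1) ^ 2 := by rw [h0]
    nlinarith [h5, e3, e4, sq_nonneg s]
  have hlim : Tendsto (fun s : ℝ => m - β ^ 2 * s) (nhdsWithin 0 (Set.Ioi 0)) (nhds m) := by
    have h6 : Tendsto (fun s : ℝ => m - β ^ 2 * s) (nhds 0) (nhds (m - β ^ 2 * 0)) :=
      (continuous_const.sub (continuous_const.mul continuous_id)).tendsto 0
    simpa using h6.mono_left nhdsWithin_le_nhds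
  have hfin : m ≤ L₂ := le_of_tendsto_of_tendsto hlim h₂ hev2
  linarith

end Aux

set_option maxHeartbeats 1000000 in
/-- Strict p-convexity + stable symmetric orthogonality (SO) for the L²-product
M ×₂ ℝ implies first-variation symmetry. -/
theorem stmt16 [MetricSpace M] (hgeo : GeodesicSpace M)
    (p : ℝ) (hp : 1 < p)
    (hpc : ∀ x : M, ∀ γ : ℝ → M, IsGeodesic γ → γ 0 ≠ γ 1 →
      StrictConvexOn ℝ (Set.Icc (0:ℝ) 1) (fun t => dist x (γ t) ^ p))
    (hSOstar : SO (WithLp 2 (M × ℝ)))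
    (γ η : ℝ → M) (hγ : IsGeodesic γ) (hη : IsGeodesic η) (h0 : γ 0 = η 0) :
    ∃ L : ℝ,
      Filter.Tendsto (fun t => (dist (η t) (γ 1) ^ 2 - dist (η 0) (γ 1) ^ 2) / t)
        (nhdsWithin 0 (Set.Ioi 0)) (nhds L) ∧
      Filter.Tendsto (fun s => (dist (η 1) (γ s) ^ 2 - dist (η 1) (γ 0) ^ 2) / s)
        (nhdsWithin 0 (Set.Ioi 0)) (nhds L) := by
  obtain ⟨L₁, hL₁⟩ := exists_rderiv hp hpc hη (γ 1)
  obtain ⟨L₂, hL₂⟩ := exists_rderiv hp hpc hγ (η 1)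
  have k₁ := key_not_lt hSOstar γ η hγ hη h0 hL₁ hL₂
  have k₂ := key_not_lt hSOstar η γ hη hγ h0.symm hL₂ hL₁
  have hEq : L₁ = L₂ := le_antisymm (not_lt.mp k₁) (not_lt.mp k₂)
  refine ⟨L₁, hL₁, ?_⟩
  rw [hEq]
  exact hL₂.congr fun s => by rw [dist_comm (γ s) (η 1), dist_comm (γ 0) (η 1)]
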